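/- arXiv:1609.05355 — 10 statements merged into one kernel-verified Lean document; each statement's English description precedes it below -/
import Mathlib

section
/- With J defined by the Bellman recursion, for every b ∈ {1,…,B} one has J(b,1) = J(b−1,V) + δ(b,1), and for every v ∈ {2,…,V} one has J(b,v) = J(b,v−1) + δ(b,v). -/
/-- `delta S hS c h r b v` is δ(b,v): δ(b,0) = 0 and
δ(b,v) = h(b) + min_{s ∈ S} (c(s) − s·(r(v) + Σ_{i=0}^{v−1} δ(b,i))). -/
noncomputable def delta (S : Finset ℝ) (hS : S.Nonempty) (c : ℝ → ℝ) (h r : ℕ → ℝ)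
    (b : ℕ) : ℕ → ℝ
  | 0 => 0
  | v + 1 => h b + S.inf' hS (fun s =>
      c s - s * (r (v + 1) + ∑ i ∈ (Finset.range (v + 1)).attach, delta S hS c h r b i.1))
decreasing_by exact Finset.mem_range.mp i.2

/-- `sigma S hS c h r b v` is σ(b,v) = Σ_{i=0}^{v} δ(b,i). -/
noncomputable def sigma (S : Finset ℝ) (hS : S.Nonempty) (c : ℝ → ℝ) (h r : ℕ → ℝ)
    (b v : ℕ) : ℝ :=
  ∑ i ∈ Finset.range (v + 1), delta S hS c h r b i

/-- `Jval S hS c h r V b v` is J(b,v) defined by the Bellman recursion: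
J(0,v) = 0 and for b ≥ 1,
J(b,v) = min_{s ∈ S} [c(s) + h(b) + s·(−r(v) + J(b−1,V))
  + (1−s)·(J(b,v−1) if v > 1 else J(b−1,V))]. -/
noncomputable def Jval (S : Finset ℝ) (hS : S.Nonempty) (c : ℝ → ℝ) (h r : ℕ → ℝ)
    (V : ℕ) : ℕ → ℕ → ℝ
  | 0, _ => 0
  | b + 1, v =>
    S.inf' hS (fun s =>
      c s + h (b + 1) + s * (-(r v) + Jval S hS c h r V b V) +
        (1 - s) * (if _hv : 1 < v then Jval S hS c h r V (b + 1) (v - 1)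
                   else Jval S hS c h r V b V))
termination_by b v => (b, v)
decreasing_by
  · exact Prod.Lex.left _ _ (Nat.lt_succ_self b)
  · exact Prod.Lex.right _ (by omega)


lemma inf'_add_const (S : Finset ℝ) (hS : S.Nonempty) (f : ℝ → ℝ) (k : ℝ) :
    S.inf' hS (fun s => f s + k) = S.inf' hS f + k := by
  apply le_antisymm
  · obtain ⟨a, ha, hae⟩ := S.exists_mem_eq_inf' hS f
    calc S.inf' hS (fun s => f s + k) ≤ f a + k := Finset.inf'_le _ ha
      _ = S.inf' hS f + k := by rw [hae]
  · obtain ⟨a, ha, hae⟩ := S.exists_mem_eq_inf' hS (fun s => f s + k)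
    rw [hae]
    have := Finset.inf'_le f ha
    linarith

lemma delta_zero (S : Finset ℝ) (hS : S.Nonempty) (c : ℝ → ℝ) (h r : ℕ → ℝ) (b : ℕ) :
    delta S hS c h r b 0 = 0 := by rw [delta]

lemma delta_succ (S : Finset ℝ) (hS : S.Nonempty) (c : ℝ → ℝ) (h r : ℕ → ℝ) (b v : ℕ) :
    delta S hS c h r b (v + 1)
      = h b + S.inf' hS (fun s => c s - s * (r (v + 1) + sigma S hS c h r b v)) := by
  rw [delta, sigma]
  congr 1
  refine Finset.inf'_congr hS rfl (fun s _ => ?_)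
  rw [Finset.sum_attach (Finset.range (v+1)) (fun i => delta S hS c h r b i)]

lemma sigma_zero (S : Finset ℝ) (hS : S.Nonempty) (c : ℝ → ℝ) (h r : ℕ → ℝ) (b : ℕ) :
    sigma S hS c h r b 0 = 0 := by
  simp [sigma, delta_zero]

lemma sigma_succ (S : Finset ℝ) (hS : S.Nonempty) (c : ℝ → ℝ) (h r : ℕ → ℝ) (b v : ℕ) :
    sigma S hS c h r b (v + 1) = sigma S hS c h r b v + delta S hS c h r b (v + 1) := by
  rw [sigma, sigma, Finset.sum_range_succ]

lemma key (S : Finset ℝ) (hS : S.Nonempty) (c : ℝ → ℝ) (h r : ℕ → ℝ) (V b : ℕ) :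
    ∀ v, Jval S hS c h r V (b + 1) (v + 1)
      = Jval S hS c h r V b V + sigma S hS c h r (b + 1) (v + 1) := by
  intro v
  induction v with
  | zero =>
    rw [Jval]
    have heq : ∀ s ∈ S,
        (c s + h (b + 1) + s * (-(r (0+1)) + Jval S hS c h r V b V) +
          (1 - s) * (if _hv : (1:ℕ) < 0+1 then Jval S hS c h r V (b + 1) (0+1 - 1)
                     else Jval S hS c h r V b V))
        = (c s - s * (r (0+1) + sigma S hS c h r (b+1) 0))
            + (Jval S hS c h r V b V + h (b + 1)) := by
      intro s _
      rw [dif_neg (by omega), sigma_zero]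
      ring
    rw [Finset.inf'_congr hS rfl heq, inf'_add_const,
      sigma_succ, sigma_zero, zero_add, delta_succ, sigma_zero]
    ring
  | succ v ih =>
    rw [Jval]
    have heq : ∀ s ∈ S,
        (c s + h (b + 1) + s * (-(r (v+1+1)) + Jval S hS c h r V b V) +
          (1 - s) * (if _hv : (1:ℕ) < v+1+1 then Jval S hS c h r V (b + 1) (v+1+1 - 1)
                     else Jval S hS c h r V b V))
        = (c s - s * (r (v+1+1) + sigma S hS c h r (b+1) (v+1)))
            + (Jval S hS c h r V b V + sigma S hS c h r (b+1) (v+1) + h (b + 1)) := by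
      intro s _
      rw [dif_pos (by omega), show v+1+1-1 = v+1 from rfl, ih]
      ring
    rw [Finset.inf'_congr hS rfl heq, inf'_add_const,
      sigma_succ S hS c h r (b+1) (v+1), delta_succ]
    ring

/-- With J defined by the Bellman recursion, for every b ∈ {1,…,B}:
J(b,1) = J(b−1,V) + δ(b,1), and for every v ∈ {2,…,V}: J(b,v) = J(b,v−1) + δ(b,v). -/
theorem stmt0
    (S : Finset ℝ) (hS : S.Nonempty) (hS01 : ∀ s ∈ S, s ∈ Set.Icc (0 : ℝ) 1)
    (c : ℝ → ℝ) (hc0 : ∀ s ∈ S, 0 ≤ c s)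
    (hcmono : ∀ s ∈ S, ∀ s' ∈ S, s ≤ s' → c s ≤ c s')
    (h : ℕ → ℝ) (hh0 : ∀ b, 0 ≤ h b) (hhmono : Monotone h)
    (r : ℕ → ℝ) (hrmono : Monotone r) (hr0 : r 0 = 0) (hrpos : ∀ v, 1 ≤ v → 0 < r v)
    (B V : ℕ) (hB : 0 < B) (hV : 0 < V)
    :
    ∀ b, 1 ≤ b → b ≤ B →
      (Jval S hS c h r V b 1 = Jval S hS c h r V (b - 1) V + delta S hS c h r b 1) ∧
      (∀ v, 2 ≤ v → v ≤ V →
        Jval S hS c h r V b v = Jval S hS c h r V b (v - 1) + delta S hS c h r b v) := by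
  intro b hb hB'
  obtain ⟨b', rfl⟩ : ∃ b', b = b' + 1 := ⟨b - 1, by omega⟩
  refine ⟨?_, ?_⟩
  · have hk := key S hS c h r V b' 0
    rw [sigma_succ, sigma_zero, zero_add] at hk
    simpa using hk
  · intro v hv2 hvV
    obtain ⟨w, rfl⟩ : ∃ w, v = w + 2 := ⟨v - 2, by omega⟩
    have h1 := key S hS c h r V b' (w + 1)
    have h2 := key S hS c h r V b' w
    rw [show w + 2 - 1 = w + 1 from rfl, h1, h2,
      show w + 1 + 1 = w + 2 from rfl, sigma_succ S hS c h r (b'+1) (w+1)]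
    ring
end

section
/- Let D1 be a nonempty finite set of real numbers, let D2 be a nonempty set of real numbers, and let f : D1 × D2 → ℝ be submodular, i.e., f(d1⁺, d2⁺) + f(d1⁻, d2⁻) ≤ f(d1⁺, d2⁻) + f(d1⁻, d2⁺) for all d1⁻ ≤ d1⁺ in D1 and d2⁻ ≤ d2⁺ in D2. Define g : D2 → D1 by g(d2) = the least element of the set of minimizers over d1 ∈ D1 of f(d1, d2). Then g is non-decreasing. -/
open Classical

/-- Topkis-type lemma: if f is submodular on D1 × D2 (D1 a nonempty finite set of reals,
D2 a nonempty set of reals), then g(d2) = least minimizer over d1 ∈ D1 of f(d1, d2)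
is non-decreasing in d2. -/
theorem stmt2
    (D1 : Finset ℝ) (hD1 : D1.Nonempty) (D2 : Set ℝ) (hD2 : D2.Nonempty)
    (f : ℝ → ℝ → ℝ)
    (hsub : ∀ d1m ∈ D1, ∀ d1p ∈ D1, ∀ d2m ∈ D2, ∀ d2p ∈ D2,
      d1m ≤ d1p → d2m ≤ d2p →
        f d1p d2p + f d1m d2m ≤ f d1p d2m + f d1m d2p) :
    ∀ d2 ∈ D2, ∀ d2' ∈ D2, d2 ≤ d2' →
      (D1.filter (fun d1 => ∀ e ∈ D1, f d1 d2 ≤ f e d2)).min'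
        (by
          obtain ⟨d, hd, hmin⟩ := D1.exists_min_image (fun e => f e d2) hD1
          exact ⟨d, Finset.mem_filter.mpr ⟨hd, fun e he => hmin e he⟩⟩) ≤
      (D1.filter (fun d1 => ∀ e ∈ D1, f d1 d2' ≤ f e d2')).min'
        (by
          obtain ⟨d, hd, hmin⟩ := D1.exists_min_image (fun e => f e d2') hD1
          exact ⟨d, Finset.mem_filter.mpr ⟨hd, fun e he => hmin e he⟩⟩) := by
  intro d2 hd2 d2' hd2' hle
  set S := D1.filter (fun d1 => ∀ e ∈ D1, f d1 d2 ≤ f e d2) with hS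
  set T := D1.filter (fun d1 => ∀ e ∈ D1, f d1 d2' ≤ f e d2') with hT
  have hSne : S.Nonempty := by
    obtain ⟨d, hd, hmin⟩ := D1.exists_min_image (fun e => f e d2) hD1
    exact ⟨d, Finset.mem_filter.mpr ⟨hd, fun e he => hmin e he⟩⟩
  have hTne : T.Nonempty := by
    obtain ⟨d, hd, hmin⟩ := D1.exists_min_image (fun e => f e d2') hD1
    exact ⟨d, Finset.mem_filter.mpr ⟨hd, fun e he => hmin e he⟩⟩
  show S.min' hSne ≤ T.min' hTne
  set a := S.min' hSne with ha
  set b := T.min' hTne with hb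
  by_contra hcon
  push_neg at hcon
  have haS : a ∈ S := Finset.min'_mem _ _
  have hbT : b ∈ T := Finset.min'_mem _ _
  obtain ⟨haD, hamin⟩ := Finset.mem_filter.mp haS
  obtain ⟨hbD, hbmin⟩ := Finset.mem_filter.mp hbT
  have h1 : f a d2 ≤ f b d2 := hamin b hbD
  have h2 : f b d2' ≤ f a d2' := hbmin a haD
  have h3 := hsub b hbD a haD d2 hd2 d2' hd2' (le_of_lt hcon) hle
  have heq : f b d2 = f a d2 := by linarith
  have hbS : b ∈ S := Finset.mem_filter.mpr ⟨hbD, fun e he => heq ▸ hamin e he⟩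
  exact absurd (Finset.min'_le S b hbS) (not_le.mpr hcon)
end

section
/- The function g : ℝ → S defined by g(x) = the least element of the set of minimizers over s ∈ S of c(s) − s·x is non-decreasing: x ≤ x' implies g(x) ≤ g(x'). -/
open Classical

/-- `gmin S hS c x` = the least element of the set of minimizers over s ∈ S of c(s) − s·x. -/
noncomputable def gmin (S : Finset ℝ) (hS : S.Nonempty) (c : ℝ → ℝ) (x : ℝ) : ℝ :=
  (S.filter (fun s => ∀ s' ∈ S, c s - s * x ≤ c s' - s' * x)).min'
    (by
      obtain ⟨s, hs, hmin⟩ := S.exists_min_image (fun s => c s - s * x) hS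
      exact ⟨s, Finset.mem_filter.mpr ⟨hs, fun s' hs' => hmin s' hs'⟩⟩)

/-- μ(b,v) = g(r(v) + σ(b,v−1)). -/
noncomputable def mu (S : Finset ℝ) (hS : S.Nonempty) (c : ℝ → ℝ) (h r : ℕ → ℝ)
    (b v : ℕ) : ℝ :=
  gmin S hS c (r v + sigma S hS c h r b (v - 1))

/-- g(x) = least minimizer over s ∈ S of c(s) − s·x is non-decreasing. -/
theorem stmt4
    (S : Finset ℝ) (hS : S.Nonempty) (hS01 : ∀ s ∈ S, s ∈ Set.Icc (0 : ℝ) 1)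
    (c : ℝ → ℝ) (hc0 : ∀ s ∈ S, 0 ≤ c s)
    (hcmono : ∀ s ∈ S, ∀ s' ∈ S, s ≤ s' → c s ≤ c s') :
    ∀ x x' : ℝ, x ≤ x' → gmin S hS c x ≤ gmin S hS c x' := by
  intro x x' hxx
  rcases eq_or_lt_of_le hxx with rfl | hlt
  · exact le_refl _
  · by_contra hcon
    push_neg at hcon
    have ha := Finset.min'_mem (S.filter (fun s => ∀ s' ∈ S, c s - s * x ≤ c s' - s' * x))
      (by
        obtain ⟨s, hs, hmin⟩ := S.exists_min_image (fun s => c s - s * x) hS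
        exact ⟨s, Finset.mem_filter.mpr ⟨hs, fun s' hs' => hmin s' hs'⟩⟩)
    have ha' := Finset.min'_mem (S.filter (fun s => ∀ s' ∈ S, c s - s * x' ≤ c s' - s' * x'))
      (by
        obtain ⟨s, hs, hmin⟩ := S.exists_min_image (fun s => c s - s * x') hS
        exact ⟨s, Finset.mem_filter.mpr ⟨hs, fun s' hs' => hmin s' hs'⟩⟩)
    rw [Finset.mem_filter] at ha ha'
    have h1 := ha.2 _ ha'.1
    have h2 := ha'.2 _ ha.1
    unfold gmin at hcon
    nlinarith [hcon, hlt, h1, h2]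
end

section
/- For every b ∈ {1,…,B} and v ∈ {1,…,V}, the function T_{b,v} : ℝ → ℝ is non-decreasing: x⁻ ≤ x⁺ implies T_{b,v}(x⁻) ≤ T_{b,v}(x⁺). -/
/-- For b ∈ {1,…,B}, v ∈ {1,…,V}, T_{b,v}(x) = x + h(b) + min_{s∈S}(c(s) − s·(r(v)+x))
is non-decreasing in x. -/
theorem stmt5
    (S : Finset ℝ) (hS : S.Nonempty) (hS01 : ∀ s ∈ S, s ∈ Set.Icc (0 : ℝ) 1)
    (c : ℝ → ℝ) (hc0 : ∀ s ∈ S, 0 ≤ c s)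
    (hcmono : ∀ s ∈ S, ∀ s' ∈ S, s ≤ s' → c s ≤ c s')
    (h : ℕ → ℝ) (hh0 : ∀ b, 0 ≤ h b) (hhmono : Monotone h)
    (r : ℕ → ℝ) (hrmono : Monotone r) (hr0 : r 0 = 0) (hrpos : ∀ v, 1 ≤ v → 0 < r v)
    (B V : ℕ) (hB : 0 < B) (hV : 0 < V)
    :
    ∀ b, 1 ≤ b → b ≤ B → ∀ v, 1 ≤ v → v ≤ V →
      ∀ x y : ℝ, x ≤ y →
        x + h b + S.inf' hS (fun s => c s - s * (r v + x)) ≤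
        y + h b + S.inf' hS (fun s => c s - s * (r v + y)) := by
  intro b _ _ v _ _ x y hxy
  obtain ⟨s, hsS, hsmin⟩ := S.exists_mem_eq_inf' hS (fun s => c s - s * (r v + y))
  rw [hsmin]
  have hinf : S.inf' hS (fun s => c s - s * (r v + x)) ≤ c s - s * (r v + x) :=
    Finset.inf'_le _ hsS
  have hs1 : s ≤ 1 := (hS01 s hsS).2
  nlinarith [hinf]
end

section
/- For every v ∈ {1,…,V}, the map b ↦ σ(b,v) is non-decreasing on {1,…,B}: if 1 ≤ b ≤ b' ≤ B then σ(b,v) ≤ σ(b',v). -/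
lemma inf'_lip (S : Finset ℝ) (hS : S.Nonempty) (hS01 : ∀ s ∈ S, s ∈ Set.Icc (0 : ℝ) 1)
    (c : ℝ → ℝ) (X Y : ℝ) (hXY : X ≤ Y) :
    S.inf' hS (fun s => c s - s * X) - (Y - X) ≤ S.inf' hS (fun s => c s - s * Y) := by
  apply Finset.le_inf'
  intro s hs
  have h1 : S.inf' hS (fun s => c s - s * X) ≤ c s - s * X := Finset.inf'_le _ hs
  obtain ⟨h0, h1'⟩ := hS01 s hs
  nlinarith

/-- For each v ∈ {1,…,V}, b ↦ σ(b,v) is non-decreasing on {1,…,B}. -/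
theorem stmt7
    (S : Finset ℝ) (hS : S.Nonempty) (hS01 : ∀ s ∈ S, s ∈ Set.Icc (0 : ℝ) 1)
    (c : ℝ → ℝ) (hc0 : ∀ s ∈ S, 0 ≤ c s)
    (hcmono : ∀ s ∈ S, ∀ s' ∈ S, s ≤ s' → c s ≤ c s')
    (h : ℕ → ℝ) (hh0 : ∀ b, 0 ≤ h b) (hhmono : Monotone h)
    (r : ℕ → ℝ) (hrmono : Monotone r) (hr0 : r 0 = 0) (hrpos : ∀ v, 1 ≤ v → 0 < r v)
    (B V : ℕ) (hB : 0 < B) (hV : 0 < V)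
    :
    ∀ v, 1 ≤ v → v ≤ V → ∀ b b', 1 ≤ b → b ≤ b' → b' ≤ B →
      sigma S hS c h r b v ≤ sigma S hS c h r b' v := by
  have key : ∀ (b b' : ℕ), b ≤ b' → ∀ v, sigma S hS c h r b v ≤ sigma S hS c h r b' v := by
    intro b b' hbb v
    induction v with
    | zero =>
      simp [sigma, delta]
    | succ v ih =>
      rw [sigma_succ, sigma_succ, delta_succ, delta_succ]
      have hX : r (v + 1) + sigma S hS c h r b v ≤ r (v + 1) + sigma S hS c h r b' v := by
        linarith
      have hlip := inf'_lip S hS hS01 c _ _ hX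
      have hh := hhmono hbb
      linarith
  intro v _ _ b b' _ hbb _
  exact key b b' hbb v
end

section
/- Fix b ∈ {1,…,B} and v ∈ {1,…,V−1}. If δ(b,v) ≥ −(r(v+1) − r(v)), then μ(b,v+1) ≥ μ(b,v). If δ(b,v) ≤ −(r(v+1) − r(v)), then μ(b,v+1) ≤ μ(b,v). -/
open Classical

lemma gmin_mem_filter (S : Finset ℝ) (hS : S.Nonempty) (c : ℝ → ℝ) (x : ℝ) :
    gmin S hS c x ∈ S.filter (fun s => ∀ s' ∈ S, c s - s * x ≤ c s' - s' * x) :=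
  Finset.min'_mem _ _

lemma gmin_mono (S : Finset ℝ) (hS : S.Nonempty) (c : ℝ → ℝ) {x y : ℝ} (hxy : x ≤ y) :
    gmin S hS c x ≤ gmin S hS c y := by
  rcases eq_or_lt_of_le hxy with rfl | hlt
  · exact le_refl _
  · have h1 := Finset.mem_filter.mp (gmin_mem_filter S hS c x)
    have h2 := Finset.mem_filter.mp (gmin_mem_filter S hS c y)
    by_contra hcon
    push_neg at hcon
    have ha := h1.2 _ h2.1
    have hb := h2.2 _ h1.1
    nlinarith

/-- Fix b ∈ {1,…,B}, v ∈ {1,…,V−1}. If δ(b,v) ≥ −(r(v+1) − r(v)) then μ(b,v+1) ≥ μ(b,v);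
if δ(b,v) ≤ −(r(v+1) − r(v)) then μ(b,v+1) ≤ μ(b,v). -/
theorem stmt9
    (S : Finset ℝ) (hS : S.Nonempty) (hS01 : ∀ s ∈ S, s ∈ Set.Icc (0 : ℝ) 1)
    (c : ℝ → ℝ) (hc0 : ∀ s ∈ S, 0 ≤ c s)
    (hcmono : ∀ s ∈ S, ∀ s' ∈ S, s ≤ s' → c s ≤ c s')
    (h : ℕ → ℝ) (hh0 : ∀ b, 0 ≤ h b) (hhmono : Monotone h)
    (r : ℕ → ℝ) (hrmono : Monotone r) (hr0 : r 0 = 0) (hrpos : ∀ v, 1 ≤ v → 0 < r v)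
    (B V : ℕ) (hB : 0 < B) (hV : 0 < V)
    (b : ℕ) (hb1 : 1 ≤ b) (hbB : b ≤ B)
    (v : ℕ) (hv1 : 1 ≤ v) (hvV : v + 1 ≤ V) :
    (delta S hS c h r b v ≥ -(r (v + 1) - r v) →
      mu S hS c h r b (v + 1) ≥ mu S hS c h r b v) ∧
    (delta S hS c h r b v ≤ -(r (v + 1) - r v) →
      mu S hS c h r b (v + 1) ≤ mu S hS c h r b v) := by
  have hx2 : mu S hS c h r b (v + 1) =
      gmin S hS c (r (v + 1) + sigma S hS c h r b v) := by
    simp [mu]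
  have hx1 : mu S hS c h r b v =
      gmin S hS c (r v + sigma S hS c h r b (v - 1)) := rfl
  have hsig : sigma S hS c h r b v =
      sigma S hS c h r b (v - 1) + delta S hS c h r b v := by
    have hv : v - 1 + 1 = v := Nat.succ_pred_eq_of_pos hv1
    unfold sigma
    rw [hv, Finset.sum_range_succ]
  constructor
  · intro hd
    rw [hx1, hx2]
    apply gmin_mono
    rw [hsig]; linarith
  · intro hd
    rw [hx1, hx2]
    apply gmin_mono
    rw [hsig]; linarith
end

section
/- Fix b ∈ {1,…,B}. If δ(b,v) ≥ −(r(v+1) − r(v)) for all v ∈ {1,…,V−1}, then the map v ↦ μ(b,v) is non-decreasing on {1,…,V}. -/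
open Classical

/-- Fix b ∈ {1,…,B}. If δ(b,v) ≥ −(r(v+1) − r(v)) for all v ∈ {1,…,V−1},
then v ↦ μ(b,v) is non-decreasing on {1,…,V}. -/
theorem stmt10
    (S : Finset ℝ) (hS : S.Nonempty) (hS01 : ∀ s ∈ S, s ∈ Set.Icc (0 : ℝ) 1)
    (c : ℝ → ℝ) (hc0 : ∀ s ∈ S, 0 ≤ c s)
    (hcmono : ∀ s ∈ S, ∀ s' ∈ S, s ≤ s' → c s ≤ c s')
    (h : ℕ → ℝ) (hh0 : ∀ b, 0 ≤ h b) (hhmono : Monotone h)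
    (r : ℕ → ℝ) (hrmono : Monotone r) (hr0 : r 0 = 0) (hrpos : ∀ v, 1 ≤ v → 0 < r v)
    (B V : ℕ) (hB : 0 < B) (hV : 0 < V)
    (b : ℕ) (hb1 : 1 ≤ b) (hbB : b ≤ B)
    (hdelta : ∀ v, 1 ≤ v → v + 1 ≤ V →
      delta S hS c h r b v ≥ -(r (v + 1) - r v)) :
    ∀ v v', 1 ≤ v → v ≤ v' → v' ≤ V →
      mu S hS c h r b v ≤ mu S hS c h r b v' := by
  -- gmin is monotone
  have gmono : ∀ x x' : ℝ, x ≤ x' → gmin S hS c x ≤ gmin S hS c x' := by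
    intro x x' hxx
    rcases eq_or_lt_of_le hxx with rfl | hlt
    · exact le_rfl
    · have hmem := Finset.min'_mem (S.filter (fun s => ∀ s' ∈ S, c s - s * x ≤ c s' - s' * x))
        (by
          obtain ⟨s, hs, hmin⟩ := S.exists_min_image (fun s => c s - s * x) hS
          exact ⟨s, Finset.mem_filter.mpr ⟨hs, fun s' hs' => hmin s' hs'⟩⟩)
      have hmem' := Finset.min'_mem (S.filter (fun s => ∀ s' ∈ S, c s - s * x' ≤ c s' - s' * x'))
        (by
          obtain ⟨s, hs, hmin⟩ := S.exists_min_image (fun s => c s - s * x') hS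
          exact ⟨s, Finset.mem_filter.mpr ⟨hs, fun s' hs' => hmin s' hs'⟩⟩)
      rw [Finset.mem_filter] at hmem hmem'
      set s := gmin S hS c x with hs
      set s' := gmin S hS c x' with hs'
      have h1 : c s - s * x ≤ c s' - s' * x := hmem.2 s' hmem'.1
      have h2 : c s' - s' * x' ≤ c s - s * x' := hmem'.2 s hmem.1
      nlinarith
  -- the argument is monotone in steps
  have hstep : ∀ n, 1 ≤ n → n + 1 ≤ V →
      r n + sigma S hS c h r b (n - 1) ≤ r (n + 1) + sigma S hS c h r b n := by
    intro n hn hnV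
    have hd := hdelta n hn hnV
    obtain ⟨m, rfl⟩ := Nat.exists_eq_add_of_le hn
    have hsig : sigma S hS c h r b (1 + m) =
        sigma S hS c h r b (1 + m - 1) + delta S hS c h r b (1 + m) := by
      simp only [sigma]
      have : 1 + m - 1 = m := by omega
      rw [this]
      have : 1 + m + 1 = (m + 1) + 1 := by omega
      rw [this, Finset.sum_range_succ]
      norm_num [Nat.add_comm]
    rw [hsig]
    linarith
  intro v v' h1v hvv' hv'V
  induction v', hvv' using Nat.le_induction with
  | base => exact le_rfl
  | succ n hn ih =>
    have hnV : n ≤ V := by omega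
    have h1n : 1 ≤ n := le_trans h1v hn
    refine le_trans (ih hnV) ?_
    have : (n + 1) - 1 = n := by omega
    unfold mu
    rw [this]
    exact gmono _ _ (hstep n h1n hv'V)
end

section
/- Fix b ∈ {1,…,B}. If δ(b,v) ≤ −(r(v+1) − r(v)) for all v ∈ {1,…,V−1}, then the map v ↦ μ(b,v) is non-increasing on {1,…,V}. -/
open Classical

/-- Fix b ∈ {1,…,B}. If δ(b,v) ≤ −(r(v+1) − r(v)) for all v ∈ {1,…,V−1},
then v ↦ μ(b,v) is non-increasing on {1,…,V}. -/
theorem stmt11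
    (S : Finset ℝ) (hS : S.Nonempty) (hS01 : ∀ s ∈ S, s ∈ Set.Icc (0 : ℝ) 1)
    (c : ℝ → ℝ) (hc0 : ∀ s ∈ S, 0 ≤ c s)
    (hcmono : ∀ s ∈ S, ∀ s' ∈ S, s ≤ s' → c s ≤ c s')
    (h : ℕ → ℝ) (hh0 : ∀ b, 0 ≤ h b) (hhmono : Monotone h)
    (r : ℕ → ℝ) (hrmono : Monotone r) (hr0 : r 0 = 0) (hrpos : ∀ v, 1 ≤ v → 0 < r v)
    (B V : ℕ) (hB : 0 < B) (hV : 0 < V)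
    (b : ℕ) (hb1 : 1 ≤ b) (hbB : b ≤ B)
    (hdelta : ∀ v, 1 ≤ v → v + 1 ≤ V →
      delta S hS c h r b v ≤ -(r (v + 1) - r v)) :
    ∀ v v', 1 ≤ v → v ≤ v' → v' ≤ V →
      mu S hS c h r b v' ≤ mu S hS c h r b v := by
  have hmem : ∀ z : ℝ, gmin S hS c z ∈ S ∧
      ∀ s' ∈ S, c (gmin S hS c z) - (gmin S hS c z) * z ≤ c s' - s' * z := by
    intro z
    have := Finset.min'_mem
      (S.filter (fun s => ∀ s' ∈ S, c s - s * z ≤ c s' - s' * z))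
      (by
        obtain ⟨s, hs, hmin⟩ := S.exists_min_image (fun s => c s - s * z) hS
        exact ⟨s, Finset.mem_filter.mpr ⟨hs, fun s' hs' => hmin s' hs'⟩⟩)
    rw [Finset.mem_filter] at this
    exact this
  have gmono : ∀ x y : ℝ, x ≤ y → gmin S hS c x ≤ gmin S hS c y := by
    intro x y hxy
    rcases eq_or_lt_of_le hxy with rfl | hlt
    · exact le_refl _
    · by_contra hcon
      push_neg at hcon
      obtain ⟨ht1, ht2⟩ := hmem y
      obtain ⟨hs1, hs2⟩ := hmem x
      have h1 := hs2 _ ht1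
      have h2 := ht2 _ hs1
      nlinarith [mul_pos (sub_pos.mpr hcon) (sub_pos.mpr hlt)]
  intro v v' hv hvv hv'V
  have key : ∀ w, v ≤ w → w ≤ V →
      r w + sigma S hS c h r b (w - 1) ≤ r v + sigma S hS c h r b (v - 1) := by
    intro w hw
    induction w, hw using Nat.le_induction with
    | base => intro _; exact le_refl _
    | succ w hw ih =>
      intro hw1V
      have hwV : w ≤ V := le_trans (Nat.le_succ w) hw1V
      have hw1 : 1 ≤ w := le_trans hv hw
      have hsub : w - 1 + 1 = w := Nat.sub_add_cancel hw1
      have hsig : sigma S hS c h r b w = sigma S hS c h r b (w - 1) + delta S hS c h r b w := by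
        unfold sigma
        rw [hsub, Finset.sum_range_succ]
      have hd := hdelta w hw1 hw1V
      have : r (w + 1) + sigma S hS c h r b ((w + 1) - 1) ≤
          r w + sigma S hS c h r b (w - 1) := by
        simp only [Nat.add_sub_cancel]
        linarith
      exact le_trans this (ih hwV)
  exact gmono _ _ (key v' hvv hv'V)
end

section
/- Suppose r(v) = r̄ for all v ∈ {1,…,V}, where r̄ > 0. Fix b ∈ {1,…,B} and define T : ℝ → ℝ by T(x) = x + h(b) + min_{s ∈ S} (c(s) − s·(r̄ + x)). If T(0) ≥ 0, then the map v ↦ σ(b,v) is non-decreasing on {1,…,V}. -/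
/-- Constant reward r(v) = r̄ on {1,…,V}. With T(x) = x + h(b) + min_{s∈S}(c(s) − s·(r̄+x)),
if T(0) ≥ 0 then v ↦ σ(b,v) is non-decreasing on {1,…,V}. -/
theorem stmt12
    (S : Finset ℝ) (hS : S.Nonempty) (hS01 : ∀ s ∈ S, s ∈ Set.Icc (0 : ℝ) 1)
    (c : ℝ → ℝ) (hc0 : ∀ s ∈ S, 0 ≤ c s)
    (hcmono : ∀ s ∈ S, ∀ s' ∈ S, s ≤ s' → c s ≤ c s')
    (h : ℕ → ℝ) (hh0 : ∀ b, 0 ≤ h b) (hhmono : Monotone h)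
    (r : ℕ → ℝ) (hrmono : Monotone r) (hr0 : r 0 = 0) (hrpos : ∀ v, 1 ≤ v → 0 < r v)
    (B V : ℕ) (hB : 0 < B) (hV : 0 < V)
    (rbar : ℝ) (hrbar : 0 < rbar) (hrconst : ∀ v, 1 ≤ v → v ≤ V → r v = rbar)
    (b : ℕ) (hb1 : 1 ≤ b) (hbB : b ≤ B)
    (T : ℝ → ℝ) (hT : ∀ x, T x = x + h b + S.inf' hS (fun s => c s - s * (rbar + x)))
    (hT0 : 0 ≤ T 0) :
    ∀ v v', 1 ≤ v → v ≤ v' → v' ≤ V →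
      sigma S hS c h r b v ≤ sigma S hS c h r b v' := by

  -- recurrence: σ(v+1) = σ(v) + h b + inf' (c s - s (r(v+1) + σ(v)))
  have hsig : ∀ v : ℕ, sigma S hS c h r b (v+1)
      = sigma S hS c h r b v + (h b
        + S.inf' hS (fun s => c s - s * (r (v+1) + sigma S hS c h r b v))) := by
    intro v
    have hd : delta S hS c h r b (v+1)
        = h b + S.inf' hS (fun s => c s - s * (r (v+1) + sigma S hS c h r b v)) := by
      rw [delta]
      congr 1
      apply Finset.inf'_congr hS rfl
      intro s _
      have : (∑ i ∈ (Finset.range (v+1)).attach, delta S hS c h r b i.1)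
          = sigma S hS c h r b v := by
        rw [Finset.sum_attach (Finset.range (v+1)) (fun i => delta S hS c h r b i)]
        rfl
      rw [this]
    rw [sigma, Finset.sum_range_succ, hd]
    rfl
  have hTmono : ∀ x y : ℝ, x ≤ y → T x ≤ T y := by
    intro x y hxy
    rw [hT, hT]
    obtain ⟨s0, hs0, hs0eq⟩ := S.exists_mem_eq_inf' hS (fun s => c s - s * (rbar + y))
    have h1 : S.inf' hS (fun s => c s - s * (rbar + x)) ≤ c s0 - s0 * (rbar + x) :=
      Finset.inf'_le _ hs0
    have hs01 := hS01 s0 hs0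
    have hs0le : s0 ≤ 1 := hs01.2
    rw [hs0eq]
    nlinarith [h1]
  have hsig0 : sigma S hS c h r b 0 = 0 := by
    simp [sigma, delta]
  have hsigT : ∀ v : ℕ, v + 1 ≤ V → sigma S hS c h r b (v+1) = T (sigma S hS c h r b v) := by
    intro v hvV
    rw [hsig v, hT, hrconst (v+1) (Nat.le_add_left 1 v) hvV]
    ring
  have hstep : ∀ v : ℕ, v + 1 ≤ V → sigma S hS c h r b v ≤ sigma S hS c h r b (v+1) := by
    intro v
    induction v with
    | zero => intro hv; rw [hsigT 0 hv, hsig0]; exact hT0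
    | succ k ih =>
      intro hv
      have hk : k + 1 ≤ V := Nat.le_of_succ_le hv
      have h2 : sigma S hS c h r b k ≤ T (sigma S hS c h r b k) := by
        rw [← hsigT k hk]; exact ih hk
      rw [hsigT (k+1) hv, hsigT k hk]
      exact hTmono _ _ h2
  intro v v' hv1 hvv' hv'V
  induction v' with
  | zero => omega
  | succ k ih =>
    rcases Nat.lt_or_ge v (k+1) with hlt | hge
    · have hkV : k ≤ V := Nat.le_of_succ_le hv'V
      calc sigma S hS c h r b v ≤ sigma S hS c h r b k := ih (by omega) hkV
        _ ≤ sigma S hS c h r b (k+1) := hstep k hv'V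
    · have : v = k + 1 := by omega
      rw [this]
end

section
/- Suppose r(v) = r̄ for all v ∈ {1,…,V}, where r̄ > 0. Fix b ∈ {1,…,B} and define T : ℝ → ℝ by T(x) = x + h(b) + min_{s ∈ S} (c(s) − s·(r̄ + x)). If T(0) ≤ 0, then the map v ↦ σ(b,v) is non-increasing on {1,…,V}. -/
/-- Constant reward r(v) = r̄ on {1,…,V}. With T(x) = x + h(b) + min_{s∈S}(c(s) − s·(r̄+x)),
if T(0) ≤ 0 then v ↦ σ(b,v) is non-increasing on {1,…,V}. -/
theorem stmt13
    (S : Finset ℝ) (hS : S.Nonempty) (hS01 : ∀ s ∈ S, s ∈ Set.Icc (0 : ℝ) 1)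
    (c : ℝ → ℝ) (hc0 : ∀ s ∈ S, 0 ≤ c s)
    (hcmono : ∀ s ∈ S, ∀ s' ∈ S, s ≤ s' → c s ≤ c s')
    (h : ℕ → ℝ) (hh0 : ∀ b, 0 ≤ h b) (hhmono : Monotone h)
    (r : ℕ → ℝ) (hrmono : Monotone r) (hr0 : r 0 = 0) (hrpos : ∀ v, 1 ≤ v → 0 < r v)
    (B V : ℕ) (hB : 0 < B) (hV : 0 < V)
    (rbar : ℝ) (hrbar : 0 < rbar) (hrconst : ∀ v, 1 ≤ v → v ≤ V → r v = rbar)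
    (b : ℕ) (hb1 : 1 ≤ b) (hbB : b ≤ B)
    (T : ℝ → ℝ) (hT : ∀ x, T x = x + h b + S.inf' hS (fun s => c s - s * (rbar + x)))
    (hT0 : T 0 ≤ 0) :
    ∀ v v', 1 ≤ v → v ≤ v' → v' ≤ V →
      sigma S hS c h r b v' ≤ sigma S hS c h r b v := by

  -- basic lemmas
  have hdelta0 : delta S hS c h r b 0 = 0 := by rw [delta]
  have hsigma0 : sigma S hS c h r b 0 = 0 := by
    simp [sigma, hdelta0]
  have hdelta_succ : ∀ v : ℕ, delta S hS c h r b (v + 1) =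
      h b + S.inf' hS (fun s => c s - s * (r (v + 1) + sigma S hS c h r b v)) := by
    intro v
    rw [delta]
    congr 1
    refine Finset.inf'_congr hS rfl ?_
    intro s _
    have : ∑ i ∈ (Finset.range (v + 1)).attach, delta S hS c h r b i.1
        = ∑ i ∈ Finset.range (v + 1), delta S hS c h r b i :=
      Finset.sum_attach _ _
    rw [this]; rfl
  have hsigma_succ : ∀ v : ℕ, sigma S hS c h r b (v + 1) =
      sigma S hS c h r b v + delta S hS c h r b (v + 1) := by
    intro v
    simp [sigma, Finset.sum_range_succ]
  have hkey : ∀ v : ℕ, v + 1 ≤ V → sigma S hS c h r b (v + 1) = T (sigma S hS c h r b v) := by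
    intro v hv
    rw [hsigma_succ, hdelta_succ, hT, hrconst (v + 1) (Nat.le_add_left 1 v) hv]
    ring
  have Tmono : ∀ x y : ℝ, x ≤ y → T x ≤ T y := by
    intro x y hxy
    rw [hT, hT]
    obtain ⟨s, hs, hgs⟩ := S.exists_mem_eq_inf' hS (fun s => c s - s * (rbar + y))
    have h1 : S.inf' hS (fun s => c s - s * (rbar + x)) ≤ c s - s * (rbar + x) :=
      Finset.inf'_le _ hs
    have hs1 : s ≤ 1 := (hS01 s hs).2
    rw [hgs]
    nlinarith
  have hdec : ∀ v : ℕ, v + 1 ≤ V → sigma S hS c h r b (v + 1) ≤ sigma S hS c h r b v := by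
    intro v
    induction v with
    | zero =>
      intro hv
      rw [hkey 0 hv, hsigma0]
      exact hT0
    | succ w ih =>
      intro hv
      have hw1 : w + 1 ≤ V := Nat.le_of_succ_le hv
      rw [hkey (w + 1) hv]
      exact le_of_le_of_eq (Tmono _ _ (ih hw1)) (hkey w hw1).symm
  intro v v' hv1 hvv' hv'V
  induction v' with
  | zero => omega
  | succ w ih =>
    rcases Nat.lt_or_ge v (w + 1) with hlt | hge
    · have h1 : sigma S hS c h r b (w + 1) ≤ sigma S hS c h r b w := hdec w hv'V
      have h2 := ih (by omega) (Nat.le_of_succ_le hv'V)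
      linarith
    · have : v = w + 1 := by omega
      rw [this]
end
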